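/- Let N ≥ 1 and let R^{∘2} be the N×N real matrix with entries min(n,m)² for n,m ∈ {1,…,N}. Then det R^{∘2} = ∏_{k=1}^{N} (2k − 1) = (2N−1)!!. Equivalently, since det R = 1 for the matrix R(n,m) = min(n,m), the volume ratio of the Γ-ellipsoid to the Γ₂-ellipsoid at γ = 1 is (det(R⁻¹R^{∘2}))^{1/2} = ((2N−1)!!)^{1/2}. -/
import Mathlib


/-- The N×N fBM covariance matrix at H = 1/2: entries `min(n,m)` on {1,…,N}. -/
noncomputable def minMatrix (N : ℕ) : Matrix (Fin N) (Fin N) ℝ :=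
  Matrix.of fun n m => (min ((n : ℕ) + 1) ((m : ℕ) + 1) : ℝ)

/-- Its entrywise (Hadamard) square, with entries `min(n,m)²`. -/
noncomputable def minMatrixSq (N : ℕ) : Matrix (Fin N) (Fin N) ℝ :=
  Matrix.of fun n m => (min ((n : ℕ) + 1) ((m : ℕ) + 1) : ℝ) ^ 2

noncomputable def Lmat (N : ℕ) : Matrix (Fin N) (Fin N) ℝ :=
  Matrix.of fun n k => if (k : ℕ) ≤ n then 1 else 0

noncomputable def Umat (N : ℕ) (c : ℕ → ℝ) : Matrix (Fin N) (Fin N) ℝ :=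
  Matrix.of fun k m => if (k : ℕ) ≤ m then c k else 0

lemma key (N : ℕ) (c : ℕ → ℝ) (n m : Fin N) :
    (Lmat N * Umat N c) n m = ∑ k ∈ Finset.range (min (n : ℕ) m + 1), c k := by
  simp only [Matrix.mul_apply, Lmat, Umat, Matrix.of_apply, ite_mul, one_mul, zero_mul]
  rw [Fin.sum_univ_eq_sum_range (fun k => if k ≤ (n:ℕ) then if k ≤ (m:ℕ) then c k else 0 else 0)]
  rw [← Finset.sum_subset (Finset.range_subset_range.2 (Nat.succ_le_of_lt (lt_of_le_of_lt
    (min_le_left _ _) n.isLt)))]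
  · apply Finset.sum_congr rfl
    intro k hk
    simp only [Finset.mem_range, Nat.lt_succ_iff, le_min_iff] at hk
    simp [hk.1, hk.2]
  · intro k _ hk
    simp only [Finset.mem_range, Nat.lt_succ_iff, le_min_iff, not_and_or, not_le] at hk
    rcases hk with h | h
    · simp [Nat.not_le.2 h]
    · simp [Nat.not_le.2 h]

lemma L_triangular (N : ℕ) : (Lmat N).BlockTriangular OrderDual.toDual := by
  intro i j h
  have h' : (i : ℕ) < (j : ℕ) := h
  show (if (j:ℕ) ≤ (i:ℕ) then (1:ℝ) else 0) = 0
  exact if_neg (by omega)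

lemma U_triangular (N : ℕ) (c : ℕ → ℝ) : (Umat N c).BlockTriangular id := by
  intro i j h
  have h' : (j : ℕ) < (i : ℕ) := h
  show (if (i:ℕ) ≤ (j:ℕ) then c i else 0) = 0
  exact if_neg (by omega)

lemma sum_odd (n : ℕ) : ∑ k ∈ Finset.range n, (2 * ((k : ℝ) + 1) - 1) = (n : ℝ) ^ 2 := by
  induction n with
  | zero => simp
  | succ n ih => rw [Finset.sum_range_succ, ih]; push_cast; ring

lemma minMatrix_eq (N : ℕ) : minMatrix N = Lmat N * Umat N (fun _ => 1) := by
  ext n m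
  rw [key]
  simp [minMatrix, min_add_add_right, Nat.cast_min]

lemma minMatrixSq_eq (N : ℕ) :
    minMatrixSq N = Lmat N * Umat N (fun k => 2 * ((k : ℝ) + 1) - 1) := by
  ext n m
  rw [key, sum_odd]
  simp [minMatrixSq, min_add_add_right, Nat.cast_min]

lemma det_minMatrix (N : ℕ) : (minMatrix N).det = 1 := by
  rw [minMatrix_eq, Matrix.det_mul, Matrix.det_of_lowerTriangular _ (L_triangular N),
    Matrix.det_of_upperTriangular (U_triangular N _)]
  simp [Lmat, Umat]

lemma det_minMatrixSq (N : ℕ) :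
    (minMatrixSq N).det = ∏ k ∈ Finset.range N, (2 * (k + 1 : ℝ) - 1) := by
  rw [minMatrixSq_eq, Matrix.det_mul, Matrix.det_of_lowerTriangular _ (L_triangular N),
    Matrix.det_of_upperTriangular (U_triangular N _)]
  simp only [Lmat, Umat, Matrix.of_apply, le_refl, if_true, Finset.prod_const_one, one_mul]
  rw [Fin.prod_univ_eq_prod_range (fun k => (2 * ((k:ℝ) + 1) - 1))]

/-- **Spectral determinant at γ = 1.** The Hadamard square of the `min(n,m)`
matrix has determinant `∏_{k=1}^N (2k-1) = (2N-1)!!`; equivalently, since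
`det R = 1`, the volume ratio of the Γ-ellipsoid to the Γ₂-ellipsoid is
`(det(R⁻¹R^{∘2}))^{1/2} = ((2N-1)!!)^{1/2}`. -/
theorem minMatrixSq_det_double_factorial (N : ℕ) (hN : 1 ≤ N) :
    (minMatrixSq N).det = ∏ k ∈ Finset.range N, (2 * (k + 1 : ℝ) - 1) ∧
    Real.sqrt ((minMatrix N)⁻¹ * minMatrixSq N).det
      = Real.sqrt (∏ k ∈ Finset.range N, (2 * (k + 1 : ℝ) - 1)) := by
  refine ⟨det_minMatrixSq N, ?_⟩
  rw [Matrix.det_mul, Matrix.det_nonsing_inv, det_minMatrix, det_minMatrixSq]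
  norm_num
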